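/- Let n ≥ 3, a > 0, C ≥ 0, and let p, q : (0, a] → ℝ be continuous with |p(r)| ≤ C and |q(r)| ≤ C for all r ∈ (0, a]. Set ψ(r) := (n−1)/r + p(r), F(r) := (n−1)(n−2)/r² + q(r), P(r) := ∫_{a}^{r} p(s) ds, and define ζ(r) := −(e^{−P(r)}/r^{n−1}) · ∫_{0}^{r} s^{n−1}·e^{P(s)}·F(s) ds for r ∈ (0, a]. Then: (i) ζ is continuously differentiable on (0, a] and satisfies ζ′(r) + ψ(r)·ζ(r) + F(r) = 0; and (ii) there exists C′ ≥ 0 such that |ζ(r) + (n−1)/r| ≤ C′ for all r ∈ (0, a]. -/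

import Mathlib

open Set MeasureTheory intervalIntegral Topology Filter

theorem zeta_constraint_solution (n : ℕ) (hn : 3 ≤ n)
    (a C : ℝ) (ha : 0 < a) (hC : 0 ≤ C)
    (p q : ℝ → ℝ)
    (hpc : ContinuousOn p (Ioc 0 a)) (hqc : ContinuousOn q (Ioc 0 a))
    (hpb : ∀ r ∈ Ioc 0 a, |p r| ≤ C)
    (hqb : ∀ r ∈ Ioc 0 a, |q r| ≤ C)
    (ψ : ℝ → ℝ) (hψ : ∀ r, ψ r = ((n:ℝ)-1)/r + p r)
    (F : ℝ → ℝ) (hF : ∀ r, F r = ((n:ℝ)-1)*((n:ℝ)-2)/r^2 + q r)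
    (P : ℝ → ℝ) (hP : ∀ r, P r = ∫ s in a..r, p s)
    (ζ : ℝ → ℝ)
    (hζ : ∀ r, ζ r = -(Real.exp (-(P r)) / r^(n-1)) *
      ∫ s in (0:ℝ)..r, s^(n-1) * Real.exp (P s) * F s) :
    (∃ ζ' : ℝ → ℝ, ContinuousOn ζ' (Ioc 0 a) ∧
      ∀ r ∈ Ioc 0 a, HasDerivWithinAt ζ (ζ' r) (Ioc 0 a) r ∧
        ζ' r + ψ r * ζ r + F r = 0) ∧
    (∃ C' : ℝ, 0 ≤ C' ∧ ∀ r ∈ Ioc 0 a, |ζ r + ((n:ℝ)-1)/r| ≤ C') := by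
  obtain ⟨m, rfl⟩ : ∃ m, n = m + 3 := ⟨n - 3, by omega⟩
  clear hn
  obtain ⟨g, hg⟩ : ∃ g : ℝ → ℝ, g = fun s => s ^ (m + 2) * Real.exp (P s) * F s := ⟨_, rfl⟩
  obtain ⟨G, hG⟩ : ∃ G : ℝ → ℝ, G = fun r => ∫ s in (0:ℝ)..r, g s := ⟨_, rfl⟩
  have hζ2 : ∀ r, ζ r = -(Real.exp (-(P r)) / r ^ (m + 2)) * G r := by
    intro r; rw [hG, hg]; exact hζ r
  have hψ2 : ∀ r, ψ r = ((m:ℝ)+2)/r + p r := by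
    intro r; rw [hψ r]; push_cast; ring_nf
  have hF2 : ∀ r, F r = ((m:ℝ)+2)*((m:ℝ)+1)/r^2 + q r := by
    intro r; rw [hF r]; push_cast; ring_nf
  have haI : a ∈ Ioc 0 a := ⟨ha, le_refl a⟩
  have hpInt : ∀ r₁ ∈ Ioc 0 a, ∀ r₂ ∈ Ioc 0 a, IntervalIntegrable p volume r₁ r₂ := by
    intro r₁ h₁ r₂ h₂
    exact (hpc.mono (Set.ordConnected_Ioc.uIcc_subset h₁ h₂)).intervalIntegrable
  have hPb : ∀ r ∈ Ioc 0 a, |P r| ≤ C * a := by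
    intro r hr
    rw [hP r, ← Real.norm_eq_abs]
    have h1 : ‖∫ s in a..r, p s‖ ≤ C * |r - a| := by
      apply intervalIntegral.norm_integral_le_of_norm_le_const
      intro x hx
      rw [Set.uIoc_of_ge hr.2] at hx
      exact hpb x ⟨lt_trans hr.1 hx.1, hx.2⟩
    refine h1.trans ?_
    have : |r - a| ≤ a := by rw [abs_sub_comm, abs_of_nonneg (by linarith [hr.2])]; linarith [hr.1]
    nlinarith
  obtain ⟨c1, hc1⟩ : ∃ c1 : ℝ, c1 = Real.exp (C * a) := ⟨_, rfl⟩
  have hc1one : (1:ℝ) ≤ c1 := by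
    rw [hc1]; nlinarith [Real.add_one_le_exp (C*a), mul_nonneg hC ha.le]
  have hc1pos : (0:ℝ) < c1 := lt_of_lt_of_le one_pos hc1one
  have hexpPle : ∀ r ∈ Ioc 0 a, Real.exp (P r) ≤ c1 := by
    intro r hr; rw [hc1]; exact Real.exp_le_exp.2 ((abs_le.1 (hPb r hr)).2)
  have hexpNle : ∀ r ∈ Ioc 0 a, Real.exp (-(P r)) ≤ c1 := by
    intro r hr; rw [hc1]; exact Real.exp_le_exp.2 (by linarith [(abs_le.1 (hPb r hr)).1])
  have hnhds : ∀ r ∈ Ioc 0 a, Ioc 0 a ∈ 𝓝[Icc 0 a] r := by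
    intro r hr
    exact mem_nhdsWithin.mpr ⟨Ioi 0, isOpen_Ioi, hr.1, fun y hy => ⟨hy.1, hy.2.2⟩⟩
  have hPd : ∀ r ∈ Ioc 0 a, HasDerivWithinAt P (p r) (Ioc 0 a) r := by
    intro r hr
    haveI : Fact (r ∈ Icc 0 a) := ⟨Ioc_subset_Icc_self hr⟩
    have hmeas : StronglyMeasurableAtFilter p (𝓝[Icc 0 a] r) :=
      ⟨Ioc 0 a, hnhds r hr, hpc.aestronglyMeasurable measurableSet_Ioc⟩
    have hcw : ContinuousWithinAt p (Icc 0 a) r :=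
      (hpc r hr).mono_of_mem_nhdsWithin (hnhds r hr)
    have hd := intervalIntegral.integral_hasDerivWithinAt_right
      (s := Icc 0 a) (t := Icc 0 a) (hpInt a haI r hr) hmeas hcw
    have h2 : HasDerivWithinAt (fun u => ∫ s in a..u, p s) (p r) (Ioc 0 a) r :=
      hd.mono Ioc_subset_Icc_self
    exact h2.congr (fun x _ => hP x) (hP r)
  have hPc : ContinuousOn P (Ioc 0 a) := fun r hr => (hPd r hr).continuousWithinAt
  have hs0 : ∀ s ∈ Ioc 0 a, (s:ℝ) ≠ 0 := fun s hs => ne_of_gt hs.1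
  have hFc : ContinuousOn F (Ioc 0 a) := by
    apply ContinuousOn.congr (f := fun r => ((m:ℝ)+2)*((m:ℝ)+1)/r^2 + q r) _ (fun r _ => hF2 r)
    exact (continuousOn_const.div (continuousOn_pow 2)
      (fun r hr => pow_ne_zero 2 (hs0 r hr))).add hqc
  have hψc : ContinuousOn ψ (Ioc 0 a) := by
    apply ContinuousOn.congr (f := fun r => ((m:ℝ)+2)/r + p r) _ (fun r _ => hψ2 r)
    exact (continuousOn_const.div continuousOn_id (fun r hr => hs0 r hr)).add hpc
  have hgc : ContinuousOn g (Ioc 0 a) := by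
    rw [hg]
    exact ((continuousOn_pow (m+2)).mul (Real.continuous_exp.comp_continuousOn hPc)).mul hFc
  have hgsplit : ∀ s ∈ Ioc 0 a, g s =
      ((m:ℝ)+2)*((m:ℝ)+1)*(s^m*Real.exp (P s)) + s^(m+2)*Real.exp (P s)*q s := by
    intro s hs
    have h0 : (s:ℝ) ≠ 0 := hs0 s hs
    simp only [hg]
    rw [hF2 s]
    field_simp
    ring
  have hapow : ∀ (k : ℕ), ∀ s ∈ Ioc 0 a, s ^ k ≤ a ^ k := by
    intro k s hs; exact pow_le_pow_left₀ hs.1.le hs.2 k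
  have hpowpos : ∀ (k : ℕ), ∀ s ∈ Ioc 0 a, (0:ℝ) < s ^ k := by
    intro k s hs; exact pow_pos hs.1 k
  obtain ⟨Mg, hMg⟩ : ∃ Mg : ℝ, Mg = ((m:ℝ)+2)*((m:ℝ)+1)*(a^m*c1) + a^(m+2)*c1*C := ⟨_, rfl⟩
  have hgb : ∀ s ∈ Ioc 0 a, |g s| ≤ Mg := by
    intro s hs
    rw [hgsplit s hs]
    have key : ∀ k : ℕ, s ^ k * Real.exp (P s) ≤ a ^ k * c1 := fun k =>
      mul_le_mul (hapow k s hs) (hexpPle s hs) (Real.exp_pos _).le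
        (le_trans (hpowpos k s hs).le (hapow k s hs))
    have h1 : |((m:ℝ)+2)*((m:ℝ)+1)*(s^m*Real.exp (P s))| ≤ ((m:ℝ)+2)*((m:ℝ)+1)*(a^m*c1) := by
      rw [abs_of_nonneg (mul_nonneg (by positivity)
        (mul_nonneg (hpowpos m s hs).le (Real.exp_pos _).le))]
      exact mul_le_mul_of_nonneg_left (key m) (by positivity)
    have h2 : |s^(m+2)*Real.exp (P s)*q s| ≤ a^(m+2)*c1*C := by
      rw [abs_mul, abs_of_nonneg (mul_nonneg (hpowpos (m+2) s hs).le (Real.exp_pos _).le)]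
      exact mul_le_mul (key (m+2)) (hqb s hs) (abs_nonneg _)
        (le_trans (mul_nonneg (hpowpos (m+2) s hs).le (Real.exp_pos _).le) (key (m+2)))
    calc |_ + _| ≤ _ := abs_add_le _ _
      _ ≤ Mg := by rw [hMg]; linarith
  have hMgnn : 0 ≤ Mg := le_trans (abs_nonneg _) (hgb a haI)
  have hIntOf : ∀ (f : ℝ → ℝ) (M : ℝ), ContinuousOn f (Ioc 0 a) → (∀ s ∈ Ioc 0 a, |f s| ≤ M) →
      ∀ r₁ ∈ Icc 0 a, ∀ r₂ ∈ Icc 0 a, IntervalIntegrable f volume r₁ r₂ := by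
    intro f M hfc hfb r₁ h₁ r₂ h₂
    rw [intervalIntegrable_iff]
    have hsub : uIoc r₁ r₂ ⊆ Ioc 0 a := fun x hx =>
      ⟨lt_of_le_of_lt (le_min h₁.1 h₂.1) hx.1, hx.2.trans (max_le h₁.2 h₂.2)⟩
    refine ⟨(hfc.mono hsub).aestronglyMeasurable measurableSet_uIoc, ?_⟩
    apply MeasureTheory.HasFiniteIntegral.restrict_of_bounded (C := M)
    · rw [uIoc]; exact measure_Ioc_lt_top
    · filter_upwards [ae_restrict_mem measurableSet_uIoc] with s hs
      exact hfb s (hsub hs)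
  have hIccmem : ∀ r ∈ Ioc 0 a, r ∈ Icc 0 a := fun r hr => Ioc_subset_Icc_self hr
  have h0mem : (0:ℝ) ∈ Icc 0 a := left_mem_Icc.2 ha.le
  have hgI := hIntOf g Mg hgc hgb
  have hGd : ∀ r ∈ Ioc 0 a, HasDerivWithinAt G (g r) (Ioc 0 a) r := by
    intro r hr
    haveI : Fact (r ∈ Icc 0 a) := ⟨Ioc_subset_Icc_self hr⟩
    have hmeas : StronglyMeasurableAtFilter g (𝓝[Icc 0 a] r) :=
      ⟨Ioc 0 a, hnhds r hr, hgc.aestronglyMeasurable measurableSet_Ioc⟩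
    have hcw : ContinuousWithinAt g (Icc 0 a) r :=
      (hgc r hr).mono_of_mem_nhdsWithin (hnhds r hr)
    have hd := intervalIntegral.integral_hasDerivWithinAt_right
      (s := Icc 0 a) (t := Icc 0 a) (hgI 0 h0mem r (hIccmem r hr)) hmeas hcw
    rw [hG]
    exact hd.mono Ioc_subset_Icc_self
  have hGc : ContinuousOn G (Ioc 0 a) := fun r hr => (hGd r hr).continuousWithinAt
  have hζc : ContinuousOn ζ (Ioc 0 a) := by
    apply ContinuousOn.congr (f := fun r => -(Real.exp (-(P r)) / r ^ (m+2)) * G r) _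
      (fun r _ => hζ2 r)
    exact (((Real.continuous_exp.comp_continuousOn hPc.neg).div
      (continuousOn_pow (m+2)) (fun r hr => pow_ne_zero _ (hs0 r hr))).neg).mul hGc
  constructor
  · refine ⟨fun r => -(ψ r * ζ r + F r), ((hψc.mul hζc).add hFc).neg, ?_⟩
    intro r hr
    refine ⟨?_, by ring⟩
    have hr0 : r ≠ 0 := hs0 r hr
    have e1 : HasDerivWithinAt (fun x => Real.exp (-(P x)))
        (Real.exp (-(P r)) * -(p r)) (Ioc 0 a) r := ((hPd r hr).neg).exp
    have e2 : HasDerivWithinAt (fun x : ℝ => x ^ (m+2))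
        (((m:ℝ)+2) * r^(m+1)) (Ioc 0 a) r := by
      have h := (hasDerivAt_pow (m+2) r).hasDerivWithinAt (s := Ioc 0 a)
      refine h.congr_deriv ?_
      push_cast; ring_nf
    have e3 := ((e1.div e2 (pow_ne_zero _ hr0)).neg).mul (hGd r hr)
    have e5 := e3.congr (fun x _ => hζ2 x) (hζ2 r)
    refine e5.congr_deriv ?_
    simp only [hψ2 r, hζ2 r, hF2 r, hg, Pi.neg_apply, Pi.div_apply]
    rw [Real.exp_neg]
    have hne : Real.exp (P r) ≠ 0 := Real.exp_ne_zero _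
    field_simp
    ring
  · obtain ⟨w, hw⟩ : ∃ w : ℝ → ℝ, w = fun s => Real.exp (P s) *
      (s^(m+2) * q s - ((m:ℝ)+2) * s^(m+1) * p s) := ⟨_, rfl⟩
    obtain ⟨Cw, hCw⟩ : ∃ Cw : ℝ, Cw = c1 * C * (a + ((m:ℝ)+2)) := ⟨_, rfl⟩
    have hCwnn : 0 ≤ Cw := by
      rw [hCw]
      have h1 : (0:ℝ) ≤ a + ((m:ℝ)+2) := by positivity
      exact mul_nonneg (mul_nonneg hc1pos.le hC) h1
    have hwc : ContinuousOn w (Ioc 0 a) := by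
      rw [hw]
      apply (Real.continuous_exp.comp_continuousOn hPc).mul
      exact (((continuousOn_pow (m+2)).mul hqc).sub
        ((continuousOn_const.mul (continuousOn_pow (m+1))).mul hpc))
    have hwb : ∀ s ∈ Ioc 0 a, |w s| ≤ Cw * s^(m+1) := by
      intro s hs
      have t0 : s^(m+2) ≤ s^(m+1) * a := by
        rw [pow_succ]
        exact mul_le_mul_of_nonneg_left hs.2 (hpowpos (m+1) s hs).le
      have t1 : |s^(m+2) * q s| ≤ s^(m+1) * a * C := by
        rw [abs_mul, abs_of_pos (hpowpos (m+2) s hs)]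
        exact mul_le_mul t0 (hqb s hs) (abs_nonneg _)
          (mul_nonneg (hpowpos (m+1) s hs).le ha.le)
      have t2 : |((m:ℝ)+2) * s^(m+1) * p s| ≤ ((m:ℝ)+2) * s^(m+1) * C := by
        rw [abs_mul, abs_of_nonneg (mul_nonneg (by positivity : (0:ℝ) ≤ (m:ℝ)+2)
          (hpowpos (m+1) s hs).le)]
        exact mul_le_mul_of_nonneg_left (hpb s hs)
          (mul_nonneg (by positivity) (hpowpos (m+1) s hs).le)
      have t3 : |s^(m+2) * q s - ((m:ℝ)+2) * s^(m+1) * p s| ≤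
          s^(m+1) * a * C + ((m:ℝ)+2) * s^(m+1) * C :=
        (abs_sub _ _).trans (add_le_add t1 t2)
      simp only [hw]
      rw [abs_mul, abs_of_pos (Real.exp_pos _)]
      calc Real.exp (P s) * |s^(m+2) * q s - ((m:ℝ)+2) * s^(m+1) * p s|
          ≤ c1 * (s^(m+1) * a * C + ((m:ℝ)+2) * s^(m+1) * C) :=
            mul_le_mul (hexpPle s hs) t3 (abs_nonneg _) hc1pos.le
        _ = Cw * s^(m+1) := by rw [hCw]; ring
    have hwb' : ∀ s ∈ Ioc 0 a, |w s| ≤ Cw * a^(m+1) := by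
      intro s hs
      exact (hwb s hs).trans (mul_le_mul_of_nonneg_left (hapow (m+1) s hs) hCwnn)
    have hwI := hIntOf w (Cw * a^(m+1)) hwc hwb'
    obtain ⟨u, hu⟩ : ∃ u : ℝ → ℝ, u = fun s => ((m:ℝ)+2) * s^(m+1) * Real.exp (P s) := ⟨_, rfl⟩
    obtain ⟨u', hu'⟩ : ∃ u' : ℝ → ℝ, u' = fun s => ((m:ℝ)+2)*((m:ℝ)+1)*s^m*Real.exp (P s) +
      ((m:ℝ)+2)*s^(m+1)*Real.exp (P s)*p s := ⟨_, rfl⟩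
    have huc : ContinuousOn u (Ioc 0 a) := by
      rw [hu]
      exact (continuousOn_const.mul (continuousOn_pow (m+1))).mul
        (Real.continuous_exp.comp_continuousOn hPc)
    have hu'c : ContinuousOn u' (Ioc 0 a) := by
      rw [hu']
      apply ContinuousOn.add
      · exact (continuousOn_const.mul (continuousOn_pow m)).mul
          (Real.continuous_exp.comp_continuousOn hPc)
      · exact ((continuousOn_const.mul (continuousOn_pow (m+1))).mul
          (Real.continuous_exp.comp_continuousOn hPc)).mul hpc
    have hud : ∀ s ∈ Ioo 0 a, HasDerivAt u (u' s) s := by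
      intro s hs
      have hPs : HasDerivAt P (p s) s :=
        (hPd s (Ioo_subset_Ioc_self hs)).hasDerivAt (Ioc_mem_nhds hs.1 hs.2)
      have h1 : HasDerivAt (fun x : ℝ => ((m:ℝ)+2) * x^(m+1))
          (((m:ℝ)+2) * (((m+1:ℕ):ℝ) * s^m)) s := (hasDerivAt_pow (m+1) s).const_mul _
      have h2 : HasDerivAt (fun x => Real.exp (P x)) (Real.exp (P s) * p s) s := hPs.exp
      have h3 := h1.mul h2
      rw [hu, hu']
      refine h3.congr_deriv ?_
      push_cast; ring
    have hgw : ∀ s ∈ Ioc 0 a, g s - w s = u' s := by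
      intro s hs
      rw [hgsplit s hs]
      simp only [hw, hu']
      ring
    have hkey : ∀ r ∈ Ioc 0 a, G r = u r + ∫ s in (0:ℝ)..r, w s := by
      intro r hr
      have step : ∀ ε ∈ Ioc 0 r, (∫ s in ε..r, g s) - (∫ s in ε..r, w s) = u r - u ε := by
        intro ε hε
        have hεI : ε ∈ Ioc 0 a := ⟨hε.1, hε.2.trans hr.2⟩
        have hsub : Icc ε r ⊆ Ioc 0 a := fun x hx =>
          ⟨lt_of_lt_of_le hε.1 hx.1, hx.2.trans hr.2⟩
        have hsub' : uIcc ε r ⊆ Ioc 0 a := by rw [uIcc_of_le hε.2]; exact hsub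
        have h1 : ∫ s in ε..r, u' s = u r - u ε := by
          apply intervalIntegral.integral_eq_sub_of_hasDeriv_right_of_le hε.2
            (huc.mono hsub) _ ((hu'c.mono hsub').intervalIntegrable)
          intro x hx
          exact (hud x ⟨lt_trans hε.1 hx.1, lt_of_lt_of_le hx.2 hr.2⟩).hasDerivWithinAt
        have h2 : ∫ s in ε..r, u' s = (∫ s in ε..r, g s) - (∫ s in ε..r, w s) := by
          rw [← intervalIntegral.integral_sub
            (hgI ε (hIccmem ε hεI) r (hIccmem r hr)) (hwI ε (hIccmem ε hεI) r (hIccmem r hr))]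
          apply intervalIntegral.integral_congr
          intro x hx
          exact (hgw x (hsub' hx)).symm
        rw [← h2, h1]
      obtain ⟨K, hK⟩ : ∃ K : ℝ, K = G r - (∫ s in (0:ℝ)..r, w s) - u r := ⟨_, rfl⟩
      have hKe : ∀ ε ∈ Ioc 0 r, K = (∫ s in (0:ℝ)..ε, g s) - (∫ s in (0:ℝ)..ε, w s) - u ε := by
        intro ε hε
        have hεI : ε ∈ Ioc 0 a := ⟨hε.1, hε.2.trans hr.2⟩
        have e1 : (∫ s in ε..r, g s) = G r - ∫ s in (0:ℝ)..ε, g s := by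
          rw [hG]
          exact (intervalIntegral.integral_interval_sub_left
            (hgI 0 h0mem r (hIccmem r hr)) (hgI 0 h0mem ε (hIccmem ε hεI))).symm
        have e2 : (∫ s in ε..r, w s) = (∫ s in (0:ℝ)..r, w s) - ∫ s in (0:ℝ)..ε, w s := by
          exact (intervalIntegral.integral_interval_sub_left
            (hwI 0 h0mem r (hIccmem r hr)) (hwI 0 h0mem ε (hIccmem ε hεI))).symm
        have h3 := step ε hε
        rw [e1, e2] at h3
        rw [hK]; linarith
      obtain ⟨M', hM'⟩ : ∃ M' : ℝ, M' = Mg + Cw * a^(m+1) + ((m:ℝ)+2)*c1 := ⟨_, rfl⟩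
      have hM'nn : 0 ≤ M' := by
        rw [hM']
        have h1 : 0 ≤ Cw * a^(m+1) := mul_nonneg hCwnn (by positivity)
        have h2 : 0 ≤ ((m:ℝ)+2)*c1 := mul_nonneg (by positivity) hc1pos.le
        linarith
      have hKb : ∀ ε ∈ Ioc 0 (min r 1), |K| ≤ M' * ε := by
        intro ε hε
        have hεr : ε ∈ Ioc 0 r := ⟨hε.1, hε.2.trans (min_le_left _ _)⟩
        have hεI : ε ∈ Ioc 0 a := ⟨hε.1, hεr.2.trans hr.2⟩
        have hε1 : ε ≤ 1 := hε.2.trans (min_le_right _ _)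
        have b1 : |∫ s in (0:ℝ)..ε, g s| ≤ Mg * ε := by
          have h := intervalIntegral.norm_integral_le_of_norm_le_const (C := Mg)
            (f := g) (a := 0) (b := ε) ?_
          · rwa [Real.norm_eq_abs, sub_zero, abs_of_pos hε.1] at h
          · intro x hx
            rw [uIoc_of_le hε.1.le] at hx
            exact hgb x ⟨hx.1, hx.2.trans hεI.2⟩
        have b2 : |∫ s in (0:ℝ)..ε, w s| ≤ (Cw * a^(m+1)) * ε := by
          have h := intervalIntegral.norm_integral_le_of_norm_le_const (C := Cw * a^(m+1))
            (f := w) (a := 0) (b := ε) ?_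
          · rwa [Real.norm_eq_abs, sub_zero, abs_of_pos hε.1] at h
          · intro x hx
            rw [uIoc_of_le hε.1.le] at hx
            exact hwb' x ⟨hx.1, hx.2.trans hεI.2⟩
        have b3 : |u ε| ≤ ((m:ℝ)+2)*c1*ε := by
          simp only [hu]
          rw [abs_mul, abs_mul, abs_of_nonneg (by positivity : (0:ℝ) ≤ ((m:ℝ)+2)),
            abs_of_pos (hpowpos (m+1) ε hεI), abs_of_pos (Real.exp_pos _)]
          have hεpow : ε^(m+1) ≤ ε := by
            calc ε^(m+1) ≤ ε^1 := pow_le_pow_of_le_one hε.1.le hε1 (by omega)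
            _ = ε := pow_one ε
          calc ((m:ℝ)+2) * ε^(m+1) * Real.exp (P ε)
              ≤ ((m:ℝ)+2) * ε^(m+1) * c1 := by
                apply mul_le_mul_of_nonneg_left (hexpPle ε hεI)
                exact mul_nonneg (by positivity) (hpowpos (m+1) ε hεI).le
            _ ≤ ((m:ℝ)+2) * ε * c1 := by
                have h5 := mul_le_mul_of_nonneg_left hεpow (by positivity : (0:ℝ) ≤ (m:ℝ)+2)
                exact mul_le_mul_of_nonneg_right h5 hc1pos.le
            _ = ((m:ℝ)+2)*c1*ε := by ring
        rw [hKe ε hεr]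
        calc |(∫ s in (0:ℝ)..ε, g s) - (∫ s in (0:ℝ)..ε, w s) - u ε|
            ≤ |(∫ s in (0:ℝ)..ε, g s) - (∫ s in (0:ℝ)..ε, w s)| + |u ε| := abs_sub _ _
          _ ≤ |∫ s in (0:ℝ)..ε, g s| + |∫ s in (0:ℝ)..ε, w s| + |u ε| := by
              linarith [abs_sub (∫ s in (0:ℝ)..ε, g s) (∫ s in (0:ℝ)..ε, w s)]
          _ ≤ Mg * ε + (Cw * a^(m+1)) * ε + ((m:ℝ)+2)*c1*ε := by linarith
          _ = M' * ε := by rw [hM']; ring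
      have hK0 : K = 0 := by
        by_contra hne
        have hpos : 0 < |K| := abs_pos.2 hne
        obtain ⟨ε, hε⟩ : ∃ ε : ℝ, ε = min (min r 1) (|K| / (2*(M'+1))) := ⟨_, rfl⟩
        have hεpos : 0 < ε := by
          rw [hε]
          apply lt_min (lt_min hr.1 one_pos)
          exact div_pos hpos (by linarith)
        have hεle : ε ∈ Ioc 0 (min r 1) := ⟨hεpos, hε ▸ min_le_left _ _⟩
        have h1 := hKb ε hεle
        have h2 : ε ≤ |K| / (2*(M'+1)) := hε ▸ min_le_right _ _
        have h3 : M' * ε ≤ (M'+1) * (|K| / (2*(M'+1))) := by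
          apply mul_le_mul (by linarith) h2 hεpos.le (by linarith)
        have h4 : (M'+1) * (|K| / (2*(M'+1))) = |K| / 2 := by
          field_simp
        rw [h4] at h3
        linarith
      rw [hK] at hK0
      linarith
    refine ⟨c1 * Cw, mul_nonneg hc1pos.le hCwnn, ?_⟩
    intro r hr
    have hr0 : r ≠ 0 := hs0 r hr
    have hrpos := hr.1
    have hWb : |∫ s in (0:ℝ)..r, w s| ≤ Cw * r^(m+2) / ((m:ℝ)+2) := by
      have hbnd : IntervalIntegrable (fun s => Cw * s^(m+1)) volume 0 r :=
        (continuous_const.mul (continuous_pow (m+1))).intervalIntegrable 0 r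
      have h := intervalIntegral.norm_integral_le_abs_of_norm_le (μ := volume)
        (a := 0) (b := r) (f := w) (g := fun s => Cw * s^(m+1)) ?_ hbnd
      · have hint : (∫ s in (0:ℝ)..r, Cw * s^(m+1)) = Cw * (r^(m+2) / ((m:ℝ)+2)) := by
          rw [intervalIntegral.integral_const_mul, integral_pow,
            show (0:ℝ)^(m+1+1) = 0 from zero_pow (by omega)]
          push_cast; ring
        rw [Real.norm_eq_abs, hint] at h
        refine h.trans ?_
        rw [abs_of_nonneg (mul_nonneg hCwnn
          (div_nonneg (hpowpos (m+2) r hr).le (by positivity)))]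
        ring_nf
        exact le_refl _
      · filter_upwards [ae_restrict_mem measurableSet_uIoc] with s hs
        rw [uIoc_of_le hrpos.le] at hs
        rw [Real.norm_eq_abs]
        exact hwb s ⟨hs.1, hs.2.trans hr.2⟩
    have hfinal : ζ r + ((m:ℝ)+2)/r =
        -(Real.exp (-(P r)) / r^(m+2)) * (∫ s in (0:ℝ)..r, w s) := by
      rw [hζ2 r, hkey r hr]
      simp only [hu]
      rw [Real.exp_neg]
      have hne : Real.exp (P r) ≠ 0 := Real.exp_ne_zero _
      field_simp
      ring
    have hcast : ((m+3:ℕ):ℝ) - 1 = (m:ℝ)+2 := by push_cast; ring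
    rw [hcast, hfinal]
    rw [abs_mul, abs_neg, abs_div, abs_of_pos (Real.exp_pos _),
      abs_of_pos (hpowpos (m+2) r hr)]
    have hb1 : Real.exp (-(P r)) / r^(m+2) ≤ c1 / r^(m+2) :=
      (div_le_div_iff_of_pos_right (hpowpos (m+2) r hr)).mpr (hexpNle r hr)
    calc Real.exp (-(P r)) / r^(m+2) * |∫ s in (0:ℝ)..r, w s|
        ≤ (c1 / r^(m+2)) * (Cw * r^(m+2) / ((m:ℝ)+2)) := by
          apply mul_le_mul hb1 hWb (abs_nonneg _)
          exact div_nonneg hc1pos.le (hpowpos (m+2) r hr).le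
      _ = c1 * Cw / ((m:ℝ)+2) := by
          field_simp
      _ ≤ c1 * Cw := by
          apply div_le_self (mul_nonneg hc1pos.le hCwnn)
          linarith [Nat.cast_nonneg (α := ℝ) m]
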